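/- For every integer m ≥ 2, the polynomial (3m^2+1) v^8 + 4m^2 v^6 + 2(m^2+1) v^4 + 4m^2 v^2 + 3m^2 + 1 has no root that is a root of unity. Consequently, with c = -√((1+2m^2-m√(1+4m^2))/(2(3m^2+1))), the quantity arccos(-c)/π is irrational. -/

import Mathlib

open Polynomial in
theorem stmt19_aux1 (m : ℕ) (hm : 2 ≤ m) :
    (∀ z : ℂ, (∃ k : ℕ, 0 < k ∧ z ^ k = 1) →
      (3 * (m : ℂ) ^ 2 + 1) * z ^ 8 + 4 * (m : ℂ) ^ 2 * z ^ 6 +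
          2 * ((m : ℂ) ^ 2 + 1) * z ^ 4 + 4 * (m : ℂ) ^ 2 * z ^ 2 +
          (3 * (m : ℂ) ^ 2 + 1) ≠ 0) := by
  rintro z ⟨k, hk, hzk⟩ hP
  have hz0 : z ≠ 0 := by
    intro h; rw [h, zero_pow hk.ne'] at hzk; exact zero_ne_one hzk
  set v : ℂ := (z ^ 2)⁻¹ with hvdef
  have hw0 : z ^ 2 ≠ 0 := pow_ne_zero _ hz0
  have hv : z ^ 2 * v = 1 := mul_inv_cancel₀ hw0
  set α : ℂ := z ^ 2 + v with hαdef
  -- α is an algebraic integer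
  have hwk : (z ^ 2) ^ k = 1 := by rw [← pow_mul, mul_comm, pow_mul, hzk, one_pow]
  have hvpow : v = (z ^ 2) ^ (k - 1) := by
    have : z ^ 2 * (z ^ 2) ^ (k - 1) = 1 := by
      rw [← pow_succ', Nat.sub_add_cancel hk, hwk]
    rw [hvdef]; exact (eq_inv_of_mul_eq_one_right this).symm
  have hwint : IsIntegral ℤ (z ^ 2) := by
    refine ⟨X ^ k - C 1, ?_, ?_⟩
    · exact monic_X_pow_sub_C 1 hk.ne'
    · simp [eval₂_sub, hwk]
  have hint : IsIntegral ℤ α := by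
    rw [hαdef, hvpow]
    exact hwint.add (hwint.pow _)
  -- α satisfies the quadratic
  have hQ : (3 * (m : ℂ) ^ 2 + 1) * α ^ 2 + 4 * (m : ℂ) ^ 2 * α - 4 * (m : ℂ) ^ 2 = 0 := by
    have M : ℂ := (m : ℂ) ^ 2
    linear_combination v ^ 2 * hP +
      ((-3 * (m:ℂ)^2 - 1) * z^6 * v + (-4 * (m:ℂ)^2) * z^4 * v + (-3 * (m:ℂ)^2 - 1) * z^4 +
        (-2 * (m:ℂ)^2 - 2) * z^2 * v + (-4 * (m:ℂ)^2) * z^2 + (-4 * (m:ℂ)^2) * v +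
        4 * (m:ℂ)^2) * hv
  -- move to rational quadratic
  have hb0 : (3 * (m : ℚ) ^ 2 + 1) ≠ 0 := by positivity
  set b : ℚ := 4 * (m : ℚ) ^ 2 / (3 * (m : ℚ) ^ 2 + 1) with hbdef
  set Q : ℚ[X] := X ^ 2 + C b * X - C b with hQdef
  have hbval : ((b : ℚ) : ℂ) = 4 * (m : ℂ) ^ 2 / (3 * (m : ℂ) ^ 2 + 1) := by
    rw [hbdef]; push_cast; ring
  have h3C : (3 * (m : ℂ) ^ 2 + 1) ≠ 0 := by
    intro h
    have : (3 * (m : ℝ) ^ 2 + 1 : ℝ) = 0 := by exact_mod_cast h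
    nlinarith [sq_nonneg (m:ℝ)]
  have haeval : aeval α Q = 0 := by
    rw [hQdef]
    simp only [map_sub, map_add, map_mul, map_pow, aeval_X, aeval_C]
    have hab : (algebraMap ℚ ℂ) b = ((b : ℚ) : ℂ) := rfl
    rw [hab, hbval]
    have hinv : (3 * (m:ℂ)^2 + 1) * (3 * (m:ℂ)^2 + 1)⁻¹ = 1 := mul_inv_cancel₀ h3C
    linear_combination (3 * (m:ℂ)^2 + 1)⁻¹ * hQ - α^2 * hinv
  have hdlt : (C b * X + C (-b)).degree < (X ^ 2 : ℚ[X]).degree := by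
    refine lt_of_le_of_lt degree_linear_le ?_
    rw [degree_X_pow]
    decide
  have hQeq : Q = X ^ 2 + (C b * X + C (-b)) := by rw [hQdef, C_neg]; ring
  have hQmonic : Q.Monic := by
    rw [hQeq]; exact monic_X_pow_add (by simpa [degree_X_pow] using hdlt)
  have hQdeg : Q.natDegree = 2 := by
    rw [hQeq]
    refine natDegree_eq_of_degree_eq_some ?_
    rw [degree_add_eq_left_of_degree_lt hdlt, degree_X_pow]
  have hintQ : IsIntegral ℚ α := hint.tower_top
  have hmono : (minpoly ℚ α).Monic := minpoly.monic hintQ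
  have hdvd : minpoly ℚ α ∣ Q := minpoly.dvd ℚ α haeval
  have hmap : minpoly ℚ α = (minpoly ℤ α).map (algebraMap ℤ ℚ) :=
    minpoly.isIntegrallyClosed_eq_field_fractions' ℚ hint
  have hdegle : (minpoly ℚ α).natDegree ≤ 2 := by
    rw [← hQdeg]
    exact natDegree_le_of_dvd hdvd hQmonic.ne_zero
  have hdegpos : 0 < (minpoly ℚ α).natDegree := minpoly.natDegree_pos hintQ
  -- coefficients of minpoly are integers
  have hcoeffint : ∀ i, ∃ n : ℤ, (minpoly ℚ α).coeff i = (n : ℚ) := by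
    intro i
    exact ⟨(minpoly ℤ α).coeff i, by rw [hmap, coeff_map]; rfl⟩
  have hmz : (2 : ℤ) ≤ (m : ℤ) := by exact_mod_cast hm
  interval_cases hdeg : (minpoly ℚ α).natDegree
  · -- degree 1 : α is an integer
    have hp1 : minpoly ℚ α = C ((minpoly ℚ α).coeff 1) * X + C ((minpoly ℚ α).coeff 0) :=
      eq_X_add_C_of_natDegree_le_one (by omega)
    have hc1 : (minpoly ℚ α).coeff 1 = 1 := by
      have := hmono.coeff_natDegree
      rwa [hdeg] at this
    obtain ⟨n, hn⟩ := hcoeffint 0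
    have hαval : α = -(n : ℂ) := by
      have h0 := minpoly.aeval ℚ α
      rw [hp1, hc1, hn] at h0
      simp only [map_add, map_mul, aeval_X, aeval_C, map_one, one_mul] at h0
      have : (algebraMap ℚ ℂ) ((n : ℚ)) = (n : ℂ) := by norm_cast
      rw [this] at h0
      linear_combination h0
    rw [hαval] at hQ
    have hZ : (3 * (m : ℤ) ^ 2 + 1) * n ^ 2 - 4 * (m : ℤ) ^ 2 * n - 4 * (m : ℤ) ^ 2 = 0 := by
      have : ((3 * (m : ℤ) ^ 2 + 1) * n ^ 2 - 4 * (m : ℤ) ^ 2 * n - 4 * (m : ℤ) ^ 2 : ℂ) = 0 := by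
        push_cast
        linear_combination hQ
      exact_mod_cast this
    rcases le_or_gt n (-1) with h | h
    · nlinarith [sq_nonneg (n + 1)]
    · rcases le_or_gt 2 n with h2 | h2
      · have h3 : (0:ℤ) ≤ (n - 2) * n := mul_nonneg (by linarith) (by linarith)
        nlinarith [mul_nonneg (show (0:ℤ) ≤ 3 * (m:ℤ)^2 + 1 by positivity) h3]
      · interval_cases n
        · nlinarith
        · nlinarith
  · -- degree 2 : minpoly = Q
    have hpq : minpoly ℚ α = Q := by
      refine eq_of_dvd_of_natDegree_le_of_leadingCoeff hdvd (by omega) ?_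
      rw [hmono.leadingCoeff, hQmonic.leadingCoeff]
    obtain ⟨n, hn⟩ := hcoeffint 1
    have hcoeff1 : Q.coeff 1 = b := by
      rw [hQdef]
      simp [coeff_X, coeff_C]
    rw [hpq, hcoeff1] at hn
    -- b = n : contradiction
    have : (n : ℚ) * (3 * (m : ℚ) ^ 2 + 1) = 4 * (m : ℚ) ^ 2 := by
      rw [← hn, hbdef]; field_simp
    have hint2 : n * (3 * (m : ℤ) ^ 2 + 1) = 4 * (m : ℤ) ^ 2 := by exact_mod_cast this
    have hpos : (0:ℤ) ≤ 3 * (m:ℤ)^2 + 1 := by positivity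
    have hm4 : (4:ℤ) ≤ (m:ℤ)^2 := by nlinarith
    rcases le_or_gt n 1 with h | h
    · have := mul_le_mul_of_nonneg_right h hpos
      linarith
    · have := mul_le_mul_of_nonneg_right (show (2:ℤ) ≤ n by omega) hpos
      linarith

open Real in
theorem stmt19_aux2 (m : ℕ) (hm : 2 ≤ m)
    (H1 : ∀ z : ℂ, (∃ k : ℕ, 0 < k ∧ z ^ k = 1) →
      (3 * (m : ℂ) ^ 2 + 1) * z ^ 8 + 4 * (m : ℂ) ^ 2 * z ^ 6 +
          2 * ((m : ℂ) ^ 2 + 1) * z ^ 4 + 4 * (m : ℂ) ^ 2 * z ^ 2 +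
          (3 * (m : ℂ) ^ 2 + 1) ≠ 0) :
    (let c : ℝ := -Real.sqrt ((1 + 2 * (m : ℝ) ^ 2 -
          (m : ℝ) * Real.sqrt (1 + 4 * (m : ℝ) ^ 2)) / (2 * (3 * (m : ℝ) ^ 2 + 1)));
      Irrational (Real.arccos (-c) / Real.pi)) := by
  intro c
  have hmR : (2:ℝ) ≤ (m:ℝ) := by exact_mod_cast hm
  set S : ℝ := Real.sqrt (1 + 4 * (m : ℝ) ^ 2) with hSdef
  have hS0 : 0 ≤ S := Real.sqrt_nonneg _
  have hS : S ^ 2 = 1 + 4 * (m : ℝ) ^ 2 := Real.sq_sqrt (by positivity)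
  set A : ℝ := (1 + 2 * (m : ℝ) ^ 2 - (m : ℝ) * S) / (2 * (3 * (m : ℝ) ^ 2 + 1)) with hAdef
  have hkey : (1 + 2 * (m:ℝ)^2 - (m:ℝ) * S) * (1 + 2 * (m:ℝ)^2 + (m:ℝ) * S)
      = 1 + 3 * (m:ℝ)^2 := by linear_combination (-(m:ℝ)^2) * hS
  have hNpos : 0 < 1 + 2 * (m:ℝ)^2 - (m:ℝ) * S := by nlinarith [hS0, hmR]
  have hA0 : 0 ≤ A := by
    rw [hAdef]
    positivity
  have hA1 : A ≤ 1 := by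
    rw [hAdef, div_le_one (by positivity)]
    nlinarith [hS0, hmR]
  -- c = -√A
  have hc : c = -Real.sqrt A := rfl
  have hcsq : Real.sqrt A ^ 2 = A := Real.sq_sqrt hA0
  -- the quartic over ℝ
  have hq4 : 4 * (3 * (m:ℝ)^2 + 1) * (Real.sqrt A)^4 - 4 * (2 * (m:ℝ)^2 + 1) * (Real.sqrt A)^2
      + 1 = 0 := by
    have h4 : (Real.sqrt A)^4 = A^2 := by rw [show (4:ℕ) = 2*2 from rfl, pow_mul, hcsq]
    rw [h4, hcsq, hAdef]
    field_simp
    linear_combination (4*(m:ℝ)^2) * hS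
  -- suppose rational
  rw [hc, neg_neg]
  by_contra hrat
  obtain ⟨q, hq⟩ : Real.arccos (Real.sqrt A) / π ∈ Set.range ((↑) : ℚ → ℝ) :=
    not_not.mp hrat
  set θ : ℝ := Real.arccos (Real.sqrt A) with hθdef
  have hπ0 : (π:ℝ) ≠ 0 := Real.pi_ne_zero
  have hθ : θ = (q:ℝ) * π := by
    field_simp at hq
    linarith [hq]
  have hcosθ : Real.cos θ = Real.sqrt A :=
    Real.cos_arccos (by nlinarith [Real.sqrt_nonneg A]) (Real.sqrt_le_one.mpr hA1)
  -- construct root of unity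
  set z : ℂ := Complex.exp ((↑(π - θ)) * Complex.I) with hzdef
  have hz0 : z ≠ 0 := Complex.exp_ne_zero _
  have hnum : (q:ℝ) * (q.den:ℝ) = (q.num:ℝ) := by
    rw [Rat.cast_def]
    field_simp
  have hzk : z ^ (2 * q.den) = 1 := by
    rw [hzdef, ← Complex.exp_nat_mul]
    rw [show ((2 * q.den : ℕ) : ℂ) * ((↑(π - θ)) * Complex.I)
        = ((q.den - q.num : ℤ) : ℂ) * (2 * ↑π * Complex.I) from ?_]
    · exact Complex.exp_int_mul_two_pi_mul_I _
    · have hre : (2 * (q.den:ℝ)) * (π - θ) = ((q.den:ℤ) - q.num : ℤ) * (2 * π) := by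
        push_cast
        rw [hθ]
        linear_combination (-2 * π) * hnum
      have hreC := congrArg (Complex.ofReal) hre
      push_cast at hreC ⊢
      linear_combination Complex.I * hreC
  have hkpos : 0 < 2 * q.den := by positivity
  -- z + z⁻¹ = -2√A
  have hzc : z + z⁻¹ = -2 * ((Real.sqrt A : ℝ) : ℂ) := by
    rw [hzdef, ← Complex.exp_neg]
    have h2c := Complex.two_cos (x := ((π - θ : ℝ) : ℂ))
    rw [← Complex.ofReal_cos, Real.cos_pi_sub, hcosθ] at h2c
    rw [neg_mul] at h2c ⊢
    rw [← h2c]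
    push_cast
    ring
  have hz2 : z ^ 2 + 1 = -2 * ((Real.sqrt A : ℝ) : ℂ) * z := by
    have hvz : z * z⁻¹ = 1 := mul_inv_cancel₀ hz0
    linear_combination z * hzc - hvz
  -- quartic over ℂ
  have hq4C : 4 * (3 * (m:ℂ)^2 + 1) * ((Real.sqrt A : ℝ) : ℂ)^4
      - 4 * (2 * (m:ℂ)^2 + 1) * ((Real.sqrt A : ℝ) : ℂ)^2 + 1 = 0 := by
    exact_mod_cast congrArg (Complex.ofReal) hq4
  -- P(z) = 0
  have hPz : (3 * (m : ℂ) ^ 2 + 1) * z ^ 8 + 4 * (m : ℂ) ^ 2 * z ^ 6 +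
      2 * ((m : ℂ) ^ 2 + 1) * z ^ 4 + 4 * (m : ℂ) ^ 2 * z ^ 2 +
      (3 * (m : ℂ) ^ 2 + 1) = 0 := by
    set C : ℂ := -((Real.sqrt A : ℝ) : ℂ) with hCdef
    have hz2' : z ^ 2 + 1 = 2 * C * z := by rw [hCdef]; linear_combination hz2
    have hq4' : 4 * (3 * (m:ℂ)^2 + 1) * C^4 - 4 * (2 * (m:ℂ)^2 + 1) * C^2 + 1 = 0 := by
      rw [hCdef]; linear_combination hq4C
    linear_combination 4 * z^4 * hq4' +
      ((3*(m:ℂ)^2+1) + (6*(m:ℂ)^2+2)*C*z + ((m:ℂ)^2-1)*z^2 + (12*(m:ℂ)^2+4)*C^2*z^2 +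
        (-4*(m:ℂ)^2-4)*C*z^3 + (24*(m:ℂ)^2+8)*C^3*z^3 + ((m:ℂ)^2-1)*z^4 +
        (12*(m:ℂ)^2+4)*C^2*z^4 + (6*(m:ℂ)^2+2)*C*z^5 + (3*(m:ℂ)^2+1)*z^6) * hz2'
  exact H1 z ⟨2 * q.den, hkpos, hzk⟩ hPz

/-- For `m ≥ 2`, the polynomial `(3m²+1)v⁸ + 4m²v⁶ + 2(m²+1)v⁴ + 4m²v² + 3m²+1` has no
root of unity among its roots; consequently, with
`c = -√((1+2m²-m√(1+4m²))/(2(3m²+1)))`, the quantity `arccos(-c)/π` is irrational. -/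
theorem stmt19 (m : ℕ) (hm : 2 ≤ m) :
    (∀ z : ℂ, (∃ k : ℕ, 0 < k ∧ z ^ k = 1) →
      (3 * (m : ℂ) ^ 2 + 1) * z ^ 8 + 4 * (m : ℂ) ^ 2 * z ^ 6 +
          2 * ((m : ℂ) ^ 2 + 1) * z ^ 4 + 4 * (m : ℂ) ^ 2 * z ^ 2 +
          (3 * (m : ℂ) ^ 2 + 1) ≠ 0) ∧
    (let c : ℝ := -Real.sqrt ((1 + 2 * (m : ℝ) ^ 2 -
          (m : ℝ) * Real.sqrt (1 + 4 * (m : ℝ) ^ 2)) / (2 * (3 * (m : ℝ) ^ 2 + 1)));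
      Irrational (Real.arccos (-c) / Real.pi)) := by
  exact ⟨stmt19_aux1 m hm, stmt19_aux2 m hm (stmt19_aux1 m hm)⟩
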